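/- Let F : (Fin q → ℕ) → Prop be a predicate such that the truth of F depends only on whether each argument is zero or nonzero (i.e., F w ↔ F (fun i => min (w i) 1)). Then for all w, F w ↔ F (fun i => min (w i) 1). More generally, the induction step: if G_r satisfies 'G_r w ↔ G_r (fun i => min (w i) 2^(r-1))' for all w : Fin q → ℕ, and G_{r+1} (w' : Fin (q/2) → ℕ) is defined as ∃ w : Fin q → ℕ, (∀ i, w' i = w (2i) + w (2i+1)) ∧ G_r w, then G_{r+1} w' ↔ G_{r+1} (fun i => min (w' i) 2^r) for all w'. -/

import Mathlib

set_option maxHeartbeats 1000000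

def capA (M a b : ℕ) : ℕ :=
  if a + b ≤ 2 * M then a else if a ≤ M then a else if b ≤ M then 2 * M - b else M

def capB (M a b : ℕ) : ℕ := min (a + b) (2 * M) - capA M a b

lemma capAB_sum (M a b : ℕ) : capA M a b + capB M a b = min (a + b) (2 * M) := by
  simp only [capA, capB]; split_ifs <;> omega

lemma capA_min (M a b : ℕ) : min (capA M a b) M = min a M := by
  simp only [capA]; split_ifs <;> omega

lemma capB_min (M a b : ℕ) : min (capB M a b) M = min b M := by
  simp only [capA, capB]; split_ifs <;> omega

def expA (M a b s : ℕ) : ℕ := if a + b = s then a else if M ≤ a then s - b else a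

lemma expA_le (M a b s : ℕ) (h : a + b = min s (2 * M)) : expA M a b s ≤ s := by
  simp only [expA]; split_ifs <;> omega

lemma expA_min (M a b s : ℕ) (h : a + b = min s (2 * M)) :
    min (expA M a b s) M = min a M := by
  simp only [expA]; split_ifs <;> omega

lemma expB_min (M a b s : ℕ) (h : a + b = min s (2 * M)) :
    min (s - expA M a b s) M = min b M := by
  simp only [expA]; split_ifs <;> omega

theorem stmt_13 (q' r : ℕ) (hr : 1 ≤ r)
    (G : (Fin (2 * q') → ℕ) → Prop)
    (hG : ∀ w, G w ↔ G (fun i => min (w i) (2 ^ (r - 1))))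
    (G' : (Fin q' → ℕ) → Prop)
    (hG' : ∀ w', G' w' ↔ ∃ w : Fin (2 * q') → ℕ,
        (∀ i : Fin q', w' i = w ⟨2 * i.val, by omega⟩ + w ⟨2 * i.val + 1, by omega⟩) ∧ G w) :
    ∀ w', G' w' ↔ G' (fun i => min (w' i) (2 ^ r)) := by
  intro w'
  set M := 2 ^ (r - 1) with hMdef
  have hM : 1 ≤ M := Nat.one_le_two_pow
  have h2 : 2 ^ r = 2 * M := by
    rw [hMdef]
    conv_lhs => rw [show r = r - 1 + 1 from by omega]
    rw [pow_succ]; ring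
  constructor
  · intro h
    rw [hG'] at h
    obtain ⟨w, hw, hGw⟩ := h
    rw [hG']
    refine ⟨fun k => if k.val % 2 = 0 then
        capA M (w ⟨2 * (k.val / 2), by have := k.isLt; omega⟩)
              (w ⟨2 * (k.val / 2) + 1, by have := k.isLt; omega⟩)
      else
        capB M (w ⟨2 * (k.val / 2), by have := k.isLt; omega⟩)
              (w ⟨2 * (k.val / 2) + 1, by have := k.isLt; omega⟩), ?_, ?_⟩
    · intro i
      simp only
      rw [if_pos (by omega), if_neg (by omega)]
      have e1 : (2 * i.val) / 2 = i.val := by omega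
      have e2 : (2 * i.val + 1) / 2 = i.val := by omega
      simp only [e1, e2]
      rw [hw i, h2, capAB_sum]
    · rw [hG]
      have h0 := (hG w).mp hGw
      convert h0 using 2 with k
      rcases Nat.even_or_odd k.val with ⟨m, hm⟩ | ⟨m, hm⟩
      · rw [if_pos (by omega), capA_min]
        congr 2
        exact Fin.ext (show 2 * (k.val / 2) = k.val by omega)
      · rw [if_neg (by omega), capB_min]
        congr 2
        exact Fin.ext (show 2 * (k.val / 2) + 1 = k.val by omega)
  · intro h
    rw [hG'] at h
    obtain ⟨w, hw, hGw⟩ := h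
    rw [hG']
    have key : ∀ j : Fin q',
        w ⟨2 * j.val, by have := j.isLt; omega⟩ + w ⟨2 * j.val + 1, by have := j.isLt; omega⟩
          = min (w' j) (2 * M) := by
      intro j
      have h1 := hw j
      rw [h2] at h1
      exact h1.symm
    refine ⟨fun k => if k.val % 2 = 0 then
        expA M (w ⟨2 * (k.val / 2), by have := k.isLt; omega⟩)
              (w ⟨2 * (k.val / 2) + 1, by have := k.isLt; omega⟩)
              (w' ⟨k.val / 2, by have := k.isLt; omega⟩)
      else
        w' ⟨k.val / 2, by have := k.isLt; omega⟩ -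
        expA M (w ⟨2 * (k.val / 2), by have := k.isLt; omega⟩)
              (w ⟨2 * (k.val / 2) + 1, by have := k.isLt; omega⟩)
              (w' ⟨k.val / 2, by have := k.isLt; omega⟩), ?_, ?_⟩
    · intro i
      simp only
      rw [if_pos (by omega), if_neg (by omega)]
      have e1 : (2 * i.val) / 2 = i.val := by omega
      have e2 : (2 * i.val + 1) / 2 = i.val := by omega
      simp only [e1, e2]
      have hle := expA_le M (w ⟨2 * i.val, by have := i.isLt; omega⟩)
        (w ⟨2 * i.val + 1, by have := i.isLt; omega⟩)
        (w' ⟨i.val, i.isLt⟩) (key i)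
      have hi : (⟨i.val, i.isLt⟩ : Fin q') = i := rfl
      rw [hi] at hle ⊢
      omega
    · rw [hG]
      have h0 := (hG w).mp hGw
      convert h0 using 2 with k
      rcases Nat.even_or_odd k.val with ⟨m, hm⟩ | ⟨m, hm⟩
      · rw [if_pos (by omega),
          expA_min _ _ _ _ (key ⟨k.val / 2, by have := k.isLt; omega⟩)]
        congr 2
        exact Fin.ext (show 2 * (k.val / 2) = k.val by omega)
      · rw [if_neg (by omega),
          expB_min _ _ _ _ (key ⟨k.val / 2, by have := k.isLt; omega⟩)]
        congr 2
        exact Fin.ext (show 2 * (k.val / 2) + 1 = k.val by omega)
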